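/- Let D be a finite digraph, let S and W be disjoint sets of vertices of D, and let (s_1,t_1), …, (s_k,t_k) be pairs of vertices such that D contains a directed path from s_i to t_i for every i ∈ [k]. Then there exist directed paths P_1, …, P_k, where each P_i is a shortest directed path from s_i to t_i in D, together with a partial function f assigning to ordered pairs (u,v) ∈ S × S a vertex f(u,v) ∈ W, such that whenever some P_i contains a subpath u → w → v with u, v ∈ S and w ∈ W, then w = f(u,v). In other words, the shortest paths can be chosen so that, for each ordered pair (u,v) ∈ S × S, all length-2 subpaths from u to v through a vertex of W occurring anywhere among the paths use the same middle vertex. -/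

import Mathlib

/-- A mixed graph `G = (V, E, A)`: a simple graph `E` of undirected edges together
with a set `A` of arcs (ordered pairs of distinct vertices). -/
structure MixedGraph (V : Type*) where
  E : SimpleGraph V
  A : V → V → Prop
  A_irrefl : ∀ v : V, ¬ A v v

namespace MixedGraph

variable {V : Type*}

/-- The underlying simple graph of a mixed graph. -/
def underlying (G : MixedGraph V) : SimpleGraph V where
  Adj u v := G.E.Adj u v ∨ G.A u v ∨ G.A v u
  symm := by
    refine ⟨?_⟩
    intro u v h
    rcases h with h | h | h
    · exact Or.inl h.symm
    · exact Or.inr (Or.inr h)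
    · exact Or.inr (Or.inl h)
  loopless := by
    refine ⟨?_⟩
    intro v h
    rcases h with h | h | h
    · exact G.E.irrefl h
    · exact G.A_irrefl v h
    · exact G.A_irrefl v h

/-- `G` contains a mixed cycle: a cyclic sequence of `p ≥ 2` pairwise distinct
vertices in which each consecutive pair (cyclically) is an undirected edge of `E`
or an arc of `A`, and no edge of `E` is used by two different consecutive pairs.
(`useE i = true` means the `i`-th consecutive pair uses an edge of `E`.) -/
def HasMixedCycle (G : MixedGraph V) : Prop :=
  ∃ (p : ℕ) (c : Fin (p + 2) → V) (useE : Fin (p + 2) → Bool),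
    Function.Injective c ∧
    (∀ i : Fin (p + 2),
      (useE i = true → G.E.Adj (c i) (c (i + 1))) ∧
      (useE i = false → G.A (c i) (c (i + 1)))) ∧
    (∀ i j : Fin (p + 2), i ≠ j → useE i = true → useE j = true →
      s(c i, c (i + 1)) ≠ s(c j, c (j + 1)))

/-- A mixed graph is mixed acyclic if it has no mixed cycle. -/
def MixedAcyclic (G : MixedGraph V) : Prop := ¬ G.HasMixedCycle

/-- An orientation of the undirected edges of a mixed graph: each edge
`{u,v} ∈ E` is assigned exactly one of the two directions `(u,v)`, `(v,u)`. -/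
structure Orientation (G : MixedGraph V) where
  dir : V → V → Prop
  dir_adj : ∀ u v : V, dir u v → G.E.Adj u v
  total : ∀ u v : V, G.E.Adj u v → dir u v ∨ dir v u
  antisymm : ∀ u v : V, dir u v → ¬ dir v u

/-- The arc relation of the digraph `G_λ`: the original arcs together with the
chosen orientations of the undirected edges. -/
def Orientation.arc {G : MixedGraph V} (lam : Orientation G) (u v : V) : Prop :=
  G.A u v ∨ lam.dir u v

/-- The orientation `lam` satisfies the set `T` of terminal pairs if `G_λ`
contains a directed path from `s` to `t` for every `(s, t) ∈ T`. -/
def Orientation.Satisfies {G : MixedGraph V} (lam : Orientation G)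
    (T : Set (V × V)) : Prop :=
  ∀ p ∈ T, Relation.ReflTransGen lam.arc p.1 p.2

/-- `(G, T)` is a yes-instance of Steiner Orientation: some orientation of the
undirected edges satisfies all terminal pairs. -/
def YesInstance (G : MixedGraph V) (T : Set (V × V)) : Prop :=
  ∃ lam : Orientation G, lam.Satisfies T

/-- The number of arcs of `G` having `v` as head or as tail. -/
noncomputable def degA (G : MixedGraph V) (v : V) : ℕ :=
  {p : V × V | G.A p.1 p.2 ∧ (p.1 = v ∨ p.2 = v)}.ncard

end MixedGraph

/-- A directed path from `s` to `t` in the digraph with arc relation `R`: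
a list of pairwise distinct vertices, consecutive ones joined by arcs,
starting at `s` and ending at `t`. -/
def IsDipath {V : Type*} (R : V → V → Prop) (l : List V) (s t : V) : Prop :=
  l.Chain' R ∧ l.Nodup ∧ l.head? = some s ∧ l.getLast? = some t


open Classical in
/-- Replace the middle vertex of every `S-W-S` pattern by `f u v`. -/
noncomputable def midfix {V : Type*} (S W : Set V) (f : V → V → V) : List V → List V
  | u :: w :: v :: rest =>
      if u ∈ S ∧ w ∈ W ∧ v ∈ S then u :: f u v :: midfix S W f (v :: rest)
      else u :: midfix S W f (w :: v :: rest)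
  | l => l
termination_by l => l.length

section midfixlemmas

variable {V : Type*} {S W : Set V} {f : V → V → V} {R : V → V → Prop}

theorem midfix_short (l : List V) (h : ∀ (u w v : V) (rest : List V), l = u :: w :: v :: rest → False) :
    midfix S W f l = l := by
  rcases l with _ | ⟨a, _ | ⟨b, _ | ⟨c, rest⟩⟩⟩
  · rw [midfix]; exact h
  · rw [midfix]; exact h
  · rw [midfix]; exact h
  · exact absurd rfl (h a b c rest)

theorem midfix_length (l : List V) : (midfix S W f l).length = l.length := by
  induction l using midfix.induct (S := S) (W := W) with
  | case1 u w v rest h ih => rw [midfix, if_pos h]; simpa using ih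
  | case2 u w v rest h ih => rw [midfix, if_neg h]; simpa using ih
  | case3 l h => rw [midfix_short l h]

theorem midfix_cons {l : List V} (h : l ≠ []) : ∃ m M, midfix S W f l = m :: M := by
  rcases h' : midfix S W f l with _ | ⟨m, M⟩
  · exfalso
    apply h
    have := midfix_length (S := S) (W := W) (f := f) l
    rw [h'] at this
    exact List.length_eq_zero_iff.mp this.symm
  · exact ⟨m, M, rfl⟩

theorem midfix_cons_notS {a : V} (ha : a ∉ S) (l : List V) :
    midfix S W f (a :: l) = a :: midfix S W f l := by
  rcases l with _ | ⟨b, _ | ⟨c, r⟩⟩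
  · rw [midfix_short _ (by simp), midfix_short _ (by simp)]
  · rw [midfix_short _ (by simp), midfix_short _ (by simp)]
  · rw [midfix, if_neg (fun hc => ha hc.1)]

theorem midfix_head? (l : List V) : (midfix S W f l).head? = l.head? := by
  induction l using midfix.induct (S := S) (W := W) with
  | case1 u w v rest h ih => rw [midfix, if_pos h]; rfl
  | case2 u w v rest h ih => rw [midfix, if_neg h]; rfl
  | case3 l h => rw [midfix_short l h]

theorem midfix_getLast? (l : List V) : (midfix S W f l).getLast? = l.getLast? := by
  induction l using midfix.induct (S := S) (W := W) with
  | case1 u w v rest h ih =>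
      rw [midfix, if_pos h]
      obtain ⟨m, M, hM⟩ := midfix_cons (S := S) (W := W) (f := f) (l := v :: rest) (by simp)
      rw [hM] at ih ⊢
      rw [List.getLast?_cons_cons, List.getLast?_cons_cons, ih]
      simp only [List.getLast?_cons_cons]
  | case2 u w v rest h ih =>
      rw [midfix, if_neg h]
      obtain ⟨m, M, hM⟩ := midfix_cons (S := S) (W := W) (f := f) (l := w :: v :: rest) (by simp)
      rw [hM] at ih ⊢
      rw [List.getLast?_cons_cons, ih]
      simp only [List.getLast?_cons_cons]
  | case3 l h => rw [midfix_short l h]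

theorem midfix_chain' (hf : ∀ u v : V, u ∈ S → v ∈ S → (∃ w, w ∈ W ∧ R u w ∧ R w v) →
      f u v ∈ W ∧ R u (f u v) ∧ R (f u v) v)
    (l : List V) (hl : l.Chain' R) : (midfix S W f l).Chain' R := by
  induction l using midfix.induct (S := S) (W := W) with
  | case1 u w v rest h ih =>
      rw [midfix, if_pos h]
      obtain ⟨hS, hW, hS'⟩ := h
      have h1 : R u w := (List.isChain_cons_cons.mp hl).1
      have hl' : (w :: v :: rest).Chain' R := (List.isChain_cons_cons.mp hl).2
      have h2 : R w v := (List.isChain_cons_cons.mp hl').1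
      have hl'' : (v :: rest).Chain' R := (List.isChain_cons_cons.mp hl').2
      obtain ⟨hfW, hf1, hf2⟩ := hf u v hS hS' ⟨w, hW, h1, h2⟩
      simp only [List.Chain']; rw [List.isChain_cons_cons]
      refine ⟨hf1, ?_⟩
      rw [List.isChain_cons]
      refine ⟨?_, ih hl''⟩
      intro y hy
      rw [midfix_head?, List.head?_cons, Option.mem_some_iff] at hy
      subst hy
      exact hf2
  | case2 u w v rest h ih =>
      rw [midfix, if_neg h]
      have h1 : R u w := (List.isChain_cons_cons.mp hl).1
      have hl' : (w :: v :: rest).Chain' R := (List.isChain_cons_cons.mp hl).2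
      simp only [List.Chain']; rw [List.isChain_cons]
      refine ⟨?_, ih hl'⟩
      intro y hy
      rw [midfix_head?, List.head?_cons, Option.mem_some_iff] at hy
      subst hy
      exact h1
  | case3 l h => rw [midfix_short l h]; exact hl

theorem midfix_pattern (hSW : Disjoint S W)
    (hf : ∀ u v : V, u ∈ S → v ∈ S → (∃ w, w ∈ W ∧ R u w ∧ R w v) →
      f u v ∈ W ∧ R u (f u v) ∧ R (f u v) v)
    (l : List V) (hl : l.Chain' R) {u w v : V}
    (hin : [u, w, v] <:+: midfix S W f l) (hu : u ∈ S) (hv : v ∈ S) (hw : w ∈ W) :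
    w = f u v := by
  induction l using midfix.induct (S := S) (W := W) with
  | case1 u₀ w₀ v₀ rest h ih =>
      rw [midfix, if_pos h] at hin
      obtain ⟨hS, hW, hS'⟩ := h
      have h1 : R u₀ w₀ := (List.isChain_cons_cons.mp hl).1
      have hl' : (w₀ :: v₀ :: rest).Chain' R := (List.isChain_cons_cons.mp hl).2
      have h2 : R w₀ v₀ := (List.isChain_cons_cons.mp hl').1
      have hl'' : (v₀ :: rest).Chain' R := (List.isChain_cons_cons.mp hl').2
      have hfW : f u₀ v₀ ∈ W := (hf u₀ v₀ hS hS' ⟨w₀, hW, h1, h2⟩).1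
      obtain ⟨l₁, l₂, heq⟩ := hin
      rcases l₁ with _ | ⟨a, _ | ⟨b, l₁⟩⟩
      · simp only [List.nil_append, List.cons_append, List.cons.injEq] at heq
        obtain ⟨rfl, rfl, htail⟩ := heq
        have hvv : v = v₀ := by
          have := midfix_head? (S := S) (W := W) (f := f) (v₀ :: rest)
          rw [← htail] at this
          simpa using this
        rw [hvv]
      · exfalso
        simp only [List.cons_append, List.nil_append, List.cons.injEq] at heq
        obtain ⟨-, rfl, -⟩ := heq
        exact Set.disjoint_left.mp hSW hu hfW
      · simp only [List.cons_append, List.cons.injEq] at heq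
        obtain ⟨-, -, htail⟩ := heq
        exact ih hl'' ⟨l₁, l₂, by rw [htail]⟩
  | case2 u₀ w₀ v₀ rest h ih =>
      rw [midfix, if_neg h] at hin
      have hl' : (w₀ :: v₀ :: rest).Chain' R := (List.isChain_cons_cons.mp hl).2
      obtain ⟨l₁, l₂, heq⟩ := hin
      rcases l₁ with _ | ⟨a, l₁⟩
      · exfalso
        simp only [List.nil_append, List.cons_append, List.cons.injEq] at heq
        obtain ⟨rfl, htail⟩ := heq
        have hww : w = w₀ := by
          have := midfix_head? (S := S) (W := W) (f := f) (w₀ :: v₀ :: rest)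
          rw [← htail] at this
          simpa using this
        subst hww
        have hwS : w ∉ S := fun hws => Set.disjoint_left.mp hSW hws hw
        rw [midfix_cons_notS hwS] at htail
        simp only [List.cons.injEq] at htail
        obtain ⟨-, htail2⟩ := htail
        have hvv : v = v₀ := by
          have := midfix_head? (S := S) (W := W) (f := f) (v₀ :: rest)
          rw [← htail2] at this
          simpa using this
        exact h ⟨hu, hw, hvv ▸ hv⟩
      · simp only [List.cons_append, List.cons.injEq] at heq
        obtain ⟨-, htail⟩ := heq
        exact ih hl' ⟨l₁, l₂, by rw [htail]⟩
  | case3 l h =>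
      rw [midfix_short l h] at hin
      exfalso
      rcases l with _ | ⟨a, _ | ⟨b, _ | ⟨c, rest⟩⟩⟩
      · simpa using hin.length_le
      · simpa using hin.length_le
      · simpa using hin.length_le
      · exact h a b c rest rfl

end midfixlemmas


section walklemmas

variable {V : Type*} {R : V → V → Prop}

theorem exists_dup_split {l : List V} (h : ¬ l.Nodup) :
    ∃ (a : V) (l₁ l₂ l₃ : List V), l = l₁ ++ a :: (l₂ ++ a :: l₃) := by
  induction l with
  | nil => exact absurd List.nodup_nil h
  | cons x l ih =>
      rw [List.nodup_cons] at h
      push_neg at h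
      by_cases hx : x ∈ l
      · obtain ⟨l₂, l₃, rfl⟩ := List.append_of_mem hx
        exact ⟨x, [], l₂, l₃, rfl⟩
      · obtain ⟨a, l₁, l₂, l₃, rfl⟩ := ih (h hx)
        exact ⟨a, x :: l₁, l₂, l₃, rfl⟩

theorem shorter_walk {l : List V} (hc : l.Chain' R) (hnd : ¬ l.Nodup) :
    ∃ l' : List V, l'.Chain' R ∧ l'.head? = l.head? ∧ l'.getLast? = l.getLast? ∧
      l'.length < l.length := by
  obtain ⟨a, l₁, l₂, l₃, rfl⟩ := exists_dup_split hnd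
  refine ⟨l₁ ++ a :: l₃, ?_, ?_, ?_, ?_⟩
  · simp only [List.Chain'] at hc ⊢
    rw [List.isChain_split]
    rw [List.isChain_split] at hc
    refine ⟨hc.1, ?_⟩
    have h2 := hc.2
    rw [show (a :: (l₂ ++ a :: l₃)) = (a :: l₂) ++ a :: l₃ by simp, List.isChain_split] at h2
    exact h2.2
  · rw [List.head?_append, List.head?_append]
    rfl
  · obtain ⟨z, hz⟩ : ∃ z, (a :: l₃).getLast? = some z :=
      Option.isSome_iff_exists.mp (List.getLast?_isSome.mpr (by simp))
    rw [show (l₁ ++ a :: (l₂ ++ a :: l₃)) = (l₁ ++ a :: l₂) ++ a :: l₃ by simp,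
      List.getLast?_append, List.getLast?_append, hz, Option.some_or, Option.some_or]
  · simp

theorem walk_to_dipath : ∀ (n : ℕ) (l : List V), l.length ≤ n → l.Chain' R →
    ∀ {a b : V}, l.head? = some a → l.getLast? = some b →
    ∃ l', IsDipath R l' a b ∧ l'.length ≤ l.length := by
  intro n
  induction n with
  | zero =>
      intro l hlen _ a b hh _
      interval_cases hl : l.length
      · rw [List.length_eq_zero_iff] at hl
        subst hl
        simp at hh
  | succ n ih =>
      intro l hlen hc a b hh hg
      by_cases hnd : l.Nodup
      · exact ⟨l, ⟨hc, hnd, hh, hg⟩, le_refl _⟩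
      · obtain ⟨l', hc', hh', hg', hlt⟩ := shorter_walk hc hnd
        obtain ⟨l'', h'', hle⟩ := ih l' (by omega) hc' (hh'.trans hh) (hg'.trans hg)
        exact ⟨l'', h'', by omega⟩

end walklemmas

open Classical in
/-- A canonical choice of middle vertex in `W` between `u` and `v`, if one exists. -/
noncomputable def fMid {V : Type*} (R : V → V → Prop) (W : Set V) (u v : V) : V :=
  if h : ∃ w, w ∈ W ∧ R u w ∧ R w v then h.choose else u

/-- Let `D` be a finite digraph, `S` and `W` disjoint vertex
sets, and `(s_i, t_i)`, `i ∈ [k]`, pairs joined by directed paths in `D`. Then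
one can choose shortest directed paths `P_i` from `s_i` to `t_i` together with
a function `f` so that whenever some `P_i` contains a subpath `u → w → v` with
`u, v ∈ S` and `w ∈ W`, then `w = f u v`; i.e. all length-2 subpaths from `u`
to `v` through `W` occurring anywhere among the paths use the same middle
vertex. -/
theorem steinerOrientation_stmt15 {V : Type*} [Fintype V]
    (R : V → V → Prop) (hR : ∀ v : V, ¬ R v v)
    (S W : Set V) (hSW : Disjoint S W)
    (k : ℕ) (s t : Fin k → V)
    (hpath : ∀ i, ∃ l : List V, IsDipath R l (s i) (t i)) :
    ∃ (P : Fin k → List V) (f : V → V → V),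
      (∀ i, IsDipath R (P i) (s i) (t i) ∧
        ∀ l : List V, IsDipath R l (s i) (t i) → (P i).length ≤ l.length) ∧
      (∀ (i : Fin k) (u w v : V), [u, w, v] <:+: P i →
        u ∈ S → v ∈ S → w ∈ W → w = f u v) := by
  classical
  have hf : ∀ u v : V, u ∈ S → v ∈ S → (∃ w, w ∈ W ∧ R u w ∧ R w v) →
      fMid R W u v ∈ W ∧ R u (fMid R W u v) ∧ R (fMid R W u v) v := by
    intro u v _ _ h
    rw [fMid, dif_pos h]
    exact ⟨h.choose_spec.1, h.choose_spec.2.1, h.choose_spec.2.2⟩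
  have hmin : ∀ i, ∃ l, IsDipath R l (s i) (t i) ∧
      ∀ l', IsDipath R l' (s i) (t i) → l.length ≤ l'.length := by
    intro i
    obtain ⟨l₀, h₀⟩ := hpath i
    have hex : ∃ n, ∃ l, IsDipath R l (s i) (t i) ∧ l.length = n := ⟨l₀.length, l₀, h₀, rfl⟩
    obtain ⟨l, hl, hlen⟩ := Nat.find_spec hex
    refine ⟨l, hl, fun l' hl' => ?_⟩
    rw [hlen]
    exact Nat.find_min' hex ⟨l', hl', rfl⟩
  choose P₀ hP₀ hP₀min using hmin
  refine ⟨fun i => midfix S W (fMid R W) (P₀ i), fMid R W, fun i => ?_, fun i u w v hin hu hv hw => ?_⟩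
  · obtain ⟨hc, hnd, hh, hg⟩ := hP₀ i
    have hc' : (midfix S W (fMid R W) (P₀ i)).Chain' R := midfix_chain' hf _ hc
    have hh' : (midfix S W (fMid R W) (P₀ i)).head? = some (s i) := by
      rw [midfix_head?]; exact hh
    have hg' : (midfix S W (fMid R W) (P₀ i)).getLast? = some (t i) := by
      rw [midfix_getLast?]; exact hg
    have hlen : (midfix S W (fMid R W) (P₀ i)).length = (P₀ i).length := midfix_length _
    have hnd' : (midfix S W (fMid R W) (P₀ i)).Nodup := by
      by_contra hbad
      obtain ⟨l', hc'', hh'', hg'', hlt⟩ := shorter_walk hc' hbad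
      obtain ⟨l'', h'', hle⟩ := walk_to_dipath l'.length l' le_rfl hc''
        (hh''.trans hh') (hg''.trans hg')
      have := hP₀min i l'' h''
      omega
    exact ⟨⟨hc', hnd', hh', hg'⟩, fun l hl => hlen ▸ hP₀min i l hl⟩
  · exact midfix_pattern hSW hf _ (hP₀ i).1 hin hu hv hw
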